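/- Let n ≥ 2 and Λ_{j,k} = (cot(π(j-k+1/2)/n) - cot(π(j-k-1/2)/n))/n. Then -∑_{1 ≤ j < k ≤ n} Λ_{j,k} = cot(π/(2n)). -/
import Mathlib

theorem stmt_11 (n : ℕ) (hn : 2 ≤ n)
    (Λ : ℕ → ℕ → ℝ)
    (hΛ : ∀ j k : ℕ, Λ j k =
      (Real.cot (Real.pi * ((j : ℝ) - k + 1 / 2) / n)
        - Real.cot (Real.pi * ((j : ℝ) - k - 1 / 2) / n)) / n) :
    -(∑ j ∈ Finset.Icc 1 n, ∑ k ∈ Finset.Ioc j n, Λ j k)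
      = Real.cot (Real.pi / (2 * n)) := by
  have hn0 : (0:ℝ) < (n:ℝ) := by exact_mod_cast Nat.pos_of_ne_zero (by omega)
  have hnne : (n:ℝ) ≠ 0 := by positivity
  set g : ℤ → ℝ := fun m => Real.cot (Real.pi * ((m : ℝ) + 1/2) / n) with hg
  have cot_period : ∀ x : ℝ, Real.cot (x - Real.pi) = Real.cot x := by
    intro x
    rw [Real.cot_eq_cos_div_sin, Real.cot_eq_cos_div_sin, Real.cos_sub_pi,
      Real.sin_sub_pi, neg_div_neg_eq]
  have cot_neg : ∀ x : ℝ, Real.cot (-x) = - Real.cot x := by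
    intro x
    rw [Real.cot_eq_cos_div_sin, Real.cot_eq_cos_div_sin, Real.cos_neg, Real.sin_neg,
      div_neg]
  -- inner telescoping sum
  have inner : ∀ j ∈ Finset.Icc 1 n,
      ∑ k ∈ Finset.Ioc j n, Λ j k = (g (-1) - g (-(1 + (n - j : ℕ)))) / n := by
    intro j hj
    obtain ⟨hj1, hjn⟩ := Finset.mem_Icc.mp hj
    have h1 : ∑ k ∈ Finset.Ioc j n, Λ j k
        = ∑ k ∈ Finset.Ioc j n, (g ((j:ℤ) - k) - g ((j:ℤ) - k - 1)) / n := by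
      refine Finset.sum_congr rfl fun k _ => ?_
      rw [hΛ j k]
      simp only [hg]
      push_cast
      ring_nf
    rw [h1, ← Finset.sum_div]
    have h2 : Finset.Ioc j n = Finset.Ico (j+1) (n+1) := by
      rw [Finset.Ico_add_one_right_eq_Icc, Finset.Icc_add_one_left_eq_Ioc]
    rw [h2, Finset.sum_Ico_eq_sum_range]
    have h3 : n + 1 - (j + 1) = n - j := by omega
    rw [h3]
    have h4 : ∀ i ∈ Finset.range (n - j),
        g ((j:ℤ) - (j + 1 + i : ℕ)) - g ((j:ℤ) - (j + 1 + i : ℕ) - 1)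
          = (fun i : ℕ => g (-(1 + i))) i - (fun i : ℕ => g (-(1 + i))) (i + 1) := by
      intro i _
      have e1 : (j:ℤ) - (j + 1 + i : ℕ) = -(1 + (i:ℤ)) := by push_cast; ring
      have e2 : (j:ℤ) - (j + 1 + i : ℕ) - 1 = -(1 + ((i:ℤ) + 1)) := by push_cast; ring
      simp only [e1, e2]
      push_cast
      ring_nf
    rw [Finset.sum_congr rfl h4, Finset.sum_range_sub' (fun i : ℕ => g (-(1 + i))) (n - j)]
    norm_num
  rw [Finset.sum_congr rfl inner]
  -- the reflected sum vanishes
  have hS : ∑ j ∈ Finset.Icc 1 n, g (-(1 + (n - j : ℕ))) = 0 := by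
    refine Finset.sum_involution (fun a _ => n + 1 - a) ?_ ?_ ?_ ?_
    · intro a ha
      obtain ⟨ha1, han⟩ := Finset.mem_Icc.mp ha
      have e1 : (n - (n + 1 - a) : ℕ) = a - 1 := by omega
      rw [e1]
      have e2 : (-(1 + ((a - 1 : ℕ) : ℤ)) : ℤ) = -(a : ℤ) := by
        have : ((a - 1 : ℕ) : ℤ) = (a : ℤ) - 1 := by omega
        rw [this]; ring
      rw [e2]
      have e3 : ((n - a : ℕ) : ℝ) = (n : ℝ) - a := by
        have : ((n - a : ℕ) : ℤ) = (n : ℤ) - a := by omega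
        exact_mod_cast congrArg (Int.cast : ℤ → ℝ) this
      have e4 : Real.pi * (((-(1 + (n - a : ℕ)) : ℤ) : ℝ) + 1/2) / n
          = -(Real.pi * (((-(a:ℤ) : ℤ) : ℝ) + 1/2) / n) - Real.pi := by
        push_cast [e3]
        field_simp
        ring
      simp only [hg]
      rw [e4, cot_period, cot_neg]
      ring
    · intro a ha hne
      obtain ⟨ha1, han⟩ := Finset.mem_Icc.mp ha
      intro heq
      apply hne
      have heq' : n + 1 - a = a := heq
      have h2a : n + 1 = 2 * a := by omega
      have e3 : ((n - a : ℕ) : ℝ) = (n : ℝ) - a := by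
        have : ((n - a : ℕ) : ℤ) = (n : ℤ) - a := by omega
        exact_mod_cast congrArg (Int.cast : ℤ → ℝ) this
      have e5 : Real.pi * (((-(1 + (n - a : ℕ)) : ℤ) : ℝ) + 1/2) / n = -(Real.pi / 2) := by
        have hna : (n : ℝ) = 2 * (a : ℝ) - 1 := by
          have : (n : ℤ) = 2 * a - 1 := by omega
          exact_mod_cast congrArg (Int.cast : ℤ → ℝ) this
        push_cast [e3]
        rw [hna]
        have h2a1 : (2 : ℝ) * (a : ℝ) - 1 ≠ 0 := by rw [← hna]; exact hnne
        field_simp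
        ring
      simp only [hg]
      rw [e5, cot_neg]
      rw [Real.cot_eq_cos_div_sin, Real.cos_pi_div_two]
      simp
    · intro a ha
      obtain ⟨ha1, han⟩ := Finset.mem_Icc.mp ha
      show n + 1 - a ∈ Finset.Icc 1 n
      exact Finset.mem_Icc.mpr ⟨by omega, by omega⟩
    · intro a ha
      obtain ⟨ha1, han⟩ := Finset.mem_Icc.mp ha
      show n + 1 - (n + 1 - a) = a
      omega
  rw [← Finset.sum_div, Finset.sum_sub_distrib, hS, sub_zero, Finset.sum_const,
    Nat.card_Icc]
  have hcard : n + 1 - 1 = n := by omega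
  rw [hcard]
  have hg1 : g (-1) = - Real.cot (Real.pi / (2 * n)) := by
    simp only [hg]
    have : Real.pi * (((-1 : ℤ) : ℝ) + 1/2) / n = -(Real.pi / (2 * n)) := by
      push_cast; field_simp; ring
    rw [this, cot_neg]
  rw [hg1]
  rw [nsmul_eq_mul]
  field_simp
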